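/- Let G be a finite group acting on a finite type X. Then, in ℚ, ∑_{ω : Quotient (MulAction.orbitRel G X)} 1 / |MulAction.stabilizer G (representative of ω)| = |X| / |G|. In other words, the homotopy cardinality of the homotopy quotient X/G (the action groupoid, whose components are the orbits and whose automorphism groups are the stabilizers) equals ‖X‖/‖G‖. -/
import Mathlib


open scoped Classical

/-- Homotopy cardinality of a homotopy quotient: for a finite group `G` acting on a
finite type `X`, the sum over the orbits of the reciprocals of the orders of the
stabilizers equals `|X| / |G|`. -/
theorem homotopy_cardinality_quotient (G X : Type*) [Group G] [Fintype G]
    [MulAction G X] [Fintype X] :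
    ∑ ω : Quotient (MulAction.orbitRel G X),
        (1 : ℚ) / (Nat.card (MulAction.stabilizer G ω.out)) =
      (Fintype.card X : ℚ) / (Fintype.card G) := by
  classical
  have hG : (Fintype.card G : ℚ) ≠ 0 := by positivity
  have hX : (Fintype.card X : ℚ) =
      ∑ ω : Quotient (MulAction.orbitRel G X),
        (Fintype.card (MulAction.orbit G ω.out) : ℚ) := by
    rw [Fintype.card_congr (MulAction.selfEquivSigmaOrbits G X), Fintype.card_sigma]
    push_cast
    rfl
  rw [hX, Finset.sum_div]
  refine Finset.sum_congr rfl fun ω _ => ?_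
  have h := MulAction.card_orbit_mul_card_stabilizer_eq_card_group G ω.out
  rw [Nat.card_eq_fintype_card]
  have hs : (Fintype.card (MulAction.stabilizer G ω.out) : ℚ) ≠ 0 := by
    exact_mod_cast (Fintype.card_ne_zero : Fintype.card (MulAction.stabilizer G ω.out) ≠ 0)
  rw [div_eq_div_iff hs hG, one_mul]
  exact_mod_cast h.symm
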